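/- Let k be a natural number, let x_i < xs < x_{i+1} be real numbers with h = x_{i+1} − x_i and hp = x_{i+1} − xs. Let u⁻, u⁺ : ℝ → ℝ be of class C^{k+1}, and let K be a constant with |(u⁻)^{(k+1)}(x)| ≤ K and |(u⁺)^{(k+1)}(x)| ≤ K for all x ∈ [x_i, x_{i+1}]. Then |u⁺(x_{i+1}) − Σ_{p=0}^{k} h^p/p! · (u⁻)^{(p)}(x_i) − Σ_{r=0}^{k} (hp)^r/r! · ((u⁺)^{(r)}(xs) − (u⁻)^{(r)}(xs))| ≤ 3K h^{k+1}/(k+1)!. -/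

import Mathlib

open Set

lemma myIteratedDerivWithin_eq {f : ℝ → ℝ} {n : ℕ} (hf : ContDiff ℝ (n : ℕ∞) f) {m : ℕ}
    (hm : m ≤ n) {s : Set ℝ} (hs : UniqueDiffOn ℝ s) {x : ℝ} (hx : x ∈ s) :
    iteratedDerivWithin m f s x = iteratedDeriv m f x := by
  have H := (contDiff_iff_ftaylorSeries.mp hf).hasFTaylorSeriesUpToOn s
  have h2 := H.eq_iteratedFDerivWithin_of_uniqueDiffOn (by exact_mod_cast hm) hs hx
  rw [iteratedDerivWithin_eq_iteratedFDerivWithin, iteratedDeriv_eq_iteratedFDeriv, ← h2]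
  rfl

lemma taylor_bound (n : ℕ) (f : ℝ → ℝ) (hf : ContDiff ℝ (n + 1 : ℕ) f) (a b M : ℝ) (hab : a < b)
    (hM : ∀ x ∈ Set.Icc a b, |iteratedDeriv (n + 1) f x| ≤ M) :
    |f b - ∑ i ∈ Finset.range (n + 1), (b - a) ^ i / (i.factorial : ℝ) * iteratedDeriv i f a|
      ≤ M * (b - a) ^ (n + 1) / ((n + 1).factorial : ℝ) := by
  have hba : (0:ℝ) ≤ b - a := sub_nonneg.mpr hab.le
  have hud : UniqueDiffOn ℝ (Icc a b) := uniqueDiffOn_Icc hab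
  have hfn : ContDiffOn ℝ n f (Icc a b) :=
    (hf.of_le (by exact_mod_cast Nat.le_succ n)).contDiffOn
  have hder : DifferentiableOn ℝ (iteratedDerivWithin n f (Icc a b)) (Ioo a b) := by
    intro x hx
    have h1 : DifferentiableAt ℝ (iteratedDeriv n f) x :=
      (hf.differentiable_iteratedDeriv n (by exact_mod_cast Nat.lt_succ_self n)).differentiableAt
    have heq : iteratedDerivWithin n f (Icc a b) =ᶠ[nhdsWithin x (Ioo a b)] iteratedDeriv n f := by
      filter_upwards [self_mem_nhdsWithin] with y hy
      exact myIteratedDerivWithin_eq hf (Nat.le_succ n) hud (Ioo_subset_Icc_self hy)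
    exact h1.differentiableWithinAt.congr_of_eventuallyEq heq
      (myIteratedDerivWithin_eq hf (Nat.le_succ n) hud (Ioo_subset_Icc_self hx))
  obtain ⟨x', hx', heq⟩ := taylor_mean_remainder_lagrange hab.ne
    (by rwa [uIcc_of_le hab.le]) (by rwa [uIcc_of_le hab.le, uIoo_of_le hab.le])
  rw [uIcc_of_le hab.le] at heq
  rw [uIoo_of_le hab.le] at hx'
  have hT : taylorWithinEval f n (Icc a b) a b =
      ∑ i ∈ Finset.range (n + 1), (b - a) ^ i / (i.factorial : ℝ) * iteratedDeriv i f a := by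
    rw [taylor_within_apply]
    refine Finset.sum_congr rfl fun i hi => ?_
    rw [myIteratedDerivWithin_eq hf (Nat.le_of_lt (Finset.mem_range.mp hi)) hud
      (left_mem_Icc.mpr hab.le), smul_eq_mul]
    ring
  rw [← hT, heq,
    myIteratedDerivWithin_eq hf le_rfl hud (Ioo_subset_Icc_self hx'),
    abs_div, abs_mul, abs_of_nonneg (pow_nonneg hba (n + 1)),
    abs_of_nonneg (by positivity : (0:ℝ) ≤ ((n+1).factorial : ℝ))]
  have hM' := hM x' (Ioo_subset_Icc_self hx')
  gcongr


/-- One-dimensional jump-corrected Taylor expansion underlying the explicit jump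
immersed interface discretization: `xs` is an interfacial point between the grid
points `xi` and `xip1`. -/
theorem jump_corrected_taylor_one_dim
    (k : ℕ) (xi xs xip1 : ℝ) (hx1 : xi < xs) (hx2 : xs < xip1)
    (h : ℝ) (hh : h = xip1 - xi)
    (hp : ℝ) (hhp : hp = xip1 - xs)
    (um up : ℝ → ℝ)
    (hum : ContDiff ℝ (k + 1) um)
    (hup : ContDiff ℝ (k + 1) up)
    (K : ℝ)
    (hKm : ∀ x ∈ Set.Icc xi xip1, |iteratedDeriv (k + 1) um x| ≤ K)
    (hKp : ∀ x ∈ Set.Icc xi xip1, |iteratedDeriv (k + 1) up x| ≤ K) :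
    |up xip1
      - ∑ p ∈ Finset.range (k + 1), h ^ p / (p.factorial : ℝ) * iteratedDeriv p um xi
      - ∑ r ∈ Finset.range (k + 1),
          hp ^ r / (r.factorial : ℝ) * (iteratedDeriv r up xs - iteratedDeriv r um xs)|
    ≤ 3 * K * h ^ (k + 1) / ((k + 1).factorial : ℝ) := by
  have hK0 : 0 ≤ K := le_trans (abs_nonneg _) (hKm xi ⟨le_rfl, (hx1.trans hx2).le⟩)
  have hsub : Icc xs xip1 ⊆ Icc xi xip1 := Icc_subset_Icc hx1.le le_rfl
  have hA := taylor_bound k up (by exact_mod_cast hup) xs xip1 K hx2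
    (fun x hx => hKp x (hsub hx))
  have hC := taylor_bound k um (by exact_mod_cast hum) xs xip1 K hx2
    (fun x hx => hKm x (hsub hx))
  have hB := taylor_bound k um (by exact_mod_cast hum) xi xip1 K (hx1.trans hx2) hKm
  rw [← hhp] at hA hC
  rw [← hh] at hB
  have hhp0 : (0:ℝ) ≤ hp := by rw [hhp]; linarith
  have hple : hp ≤ h := by rw [hhp, hh]; linarith
  have hpow : hp ^ (k + 1) ≤ h ^ (k + 1) := pow_le_pow_left₀ hhp0 hple _
  have hF : (0:ℝ) < ((k + 1).factorial : ℝ) := by positivity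
  set SA := ∑ r ∈ Finset.range (k + 1), hp ^ r / (r.factorial : ℝ) * iteratedDeriv r up xs
    with hSA
  set SC := ∑ r ∈ Finset.range (k + 1), hp ^ r / (r.factorial : ℝ) * iteratedDeriv r um xs
    with hSC
  set SB := ∑ p ∈ Finset.range (k + 1), h ^ p / (p.factorial : ℝ) * iteratedDeriv p um xi
    with hSB
  have hsum : ∑ r ∈ Finset.range (k + 1),
      hp ^ r / (r.factorial : ℝ) * (iteratedDeriv r up xs - iteratedDeriv r um xs)
      = SA - SC := by
    rw [hSA, hSC, ← Finset.sum_sub_distrib]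
    exact Finset.sum_congr rfl fun i _ => by ring
  rw [hsum]
  have hsplit : up xip1 - SB - (SA - SC)
      = (up xip1 - SA) + (um xip1 - SB) - (um xip1 - SC) := by ring
  rw [hsplit]
  have h1 : |(up xip1 - SA) + (um xip1 - SB) - (um xip1 - SC)|
      ≤ |up xip1 - SA| + |um xip1 - SB| + |um xip1 - SC| :=
    (abs_sub _ _).trans (by gcongr; exact abs_add_le _ _)
  refine h1.trans ?_
  have h2 : K * hp ^ (k + 1) ≤ K * h ^ (k + 1) := by gcongr
  have h3 : K * hp ^ (k + 1) / ((k + 1).factorial : ℝ)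
      ≤ K * h ^ (k + 1) / ((k + 1).factorial : ℝ) := by gcongr
  have h4 : 3 * K * h ^ (k + 1) / ((k + 1).factorial : ℝ)
      = K * h ^ (k + 1) / ((k + 1).factorial : ℝ) + K * h ^ (k + 1) / ((k + 1).factorial : ℝ)
        + K * h ^ (k + 1) / ((k + 1).factorial : ℝ) := by ring
  rw [h4]
  linarith [hA.trans h3, hB, hC.trans h3]
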